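/- arXiv:1909.12918 — 2 statements merged into one kernel-verified Lean document; each statement's English description precedes it below -/
import Mathlib

section
/- Let P be a finite Frobenius poset and let F = F_S ∈ (g_A(P))* be a small Frobenius functional such that U_F(P) is a filter of P, D_F(P) is an order ideal of P, and B_F(P) = ∅. Then every eigenvalue of ad(F̂) = [F̂,·] acting on g_A(P) is equal to 0 or 1, i.e., the spectrum of g_A(P) consists of 0's and 1's. -/
/-!
Common definitions: for a finite poset `P`, identified with `{1,…,n}` via a linear
extension, represented by a relation `le` on `Fin n`, the type-A Lie poset algebra
`gA le` is the Lie subalgebra of `sl(n, ℂ)` spanned by the matrix units `E p q`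
for `p ≺ q` together with all trace-zero diagonal matrices (here realized as a
submodule of complex `n × n` matrices, which is closed under the commutator
bracket).  `gFull le` is the full Lie poset algebra `g(P)` (with all diagonal
matrices).  `FS S` is the functional `F_S = ∑_{(p,q) ∈ S} E*_{p,q}`.
-/

namespace LiePosets

noncomputable section

open scoped BigOperators

/-- Complex `n × n` matrices. -/
abbrev M (n : ℕ) : Type := Matrix (Fin n) (Fin n) ℂ

/-- The strict relation `p ≺ q` attached to a poset relation `le`. -/
def Strict {n : ℕ} (le : Fin n → Fin n → Prop) (p q : Fin n) : Prop := le p q ∧ p ≠ q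

/-- The type-A Lie poset algebra `g_A(P)`: trace-zero matrices supported on
relations of the poset (off-diagonal entries vanish off the strict relations). -/
def gA {n : ℕ} (le : Fin n → Fin n → Prop) : Submodule ℂ (M n) where
  carrier := {A | Matrix.trace A = 0 ∧ ∀ p q : Fin n, p ≠ q → ¬ le p q → A p q = 0}
  add_mem' := by
    rintro A B ⟨hA, hA'⟩ ⟨hB, hB'⟩
    exact ⟨by simp [hA, hB], fun p q h1 h2 => by
      simp [Matrix.add_apply, hA' p q h1 h2, hB' p q h1 h2]⟩
  zero_mem' := ⟨by simp, fun p q _ _ => by simp⟩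
  smul_mem' := by
    rintro c A ⟨hA, hA'⟩
    exact ⟨by simp [hA], fun p q h1 h2 => by
      simp [Matrix.smul_apply, hA' p q h1 h2]⟩

/-- The Lie poset algebra `g(P)` (all diagonal matrices allowed). -/
def gFull {n : ℕ} (le : Fin n → Fin n → Prop) : Submodule ℂ (M n) where
  carrier := {A | ∀ p q : Fin n, p ≠ q → ¬ le p q → A p q = 0}
  add_mem' := by
    rintro A B hA hB p q h1 h2
    simp [Matrix.add_apply, hA p q h1 h2, hB p q h1 h2]
  zero_mem' := fun p q _ _ => by simp
  smul_mem' := by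
    rintro c A hA p q h1 h2
    simp [Matrix.smul_apply, hA p q h1 h2]

/-- The functional `F_S = ∑_{(p,q) ∈ S} E*_{p,q}` reading off the sum of the
coefficients of the matrix entries indexed by `S`. -/
def FS {n : ℕ} (S : Finset (Fin n × Fin n)) : M n →ₗ[ℂ] ℂ where
  toFun A := ∑ pq ∈ S, A pq.1 pq.2
  map_add' A B := by simp [Matrix.add_apply, Finset.sum_add_distrib]
  map_smul' c A := by simp [Matrix.smul_apply, Finset.mul_sum]

/-- `F` is a Frobenius functional on the Lie subalgebra (submodule) `g`:
the kernel of the Kirillov form `B_F(x, y) = F ⁅x, y⁆` on `g` is trivial. -/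
def IsFrobeniusOn {n : ℕ} (g : Submodule ℂ (M n)) (F : M n →ₗ[ℂ] ℂ) : Prop :=
  ∀ x ∈ g, (∀ y ∈ g, F ⁅x, y⁆ = 0) → x = 0

/-- `H` is a principal element for `F` on `g`:  `B_F(H, ·) = F` on `g`. -/
def IsPrincipal {n : ℕ} (g : Submodule ℂ (M n)) (F : M n →ₗ[ℂ] ℂ) (H : M n) : Prop :=
  H ∈ g ∧ ∀ y ∈ g, F ⁅H, y⁆ = F y

/-- The adjoint action `ad H = ⁅H, -⁆` as a linear endomorphism of matrices. -/
def adE {n : ℕ} (H : M n) : Module.End ℂ (M n) :=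
  LinearMap.mulLeft ℂ H - LinearMap.mulRight ℂ H

/-- Multiplicity of `μ` as an eigenvalue of `ad H` acting on `g`. -/
def eigMult {n : ℕ} (g : Submodule ℂ (M n)) (H : M n) (μ : ℂ) : ℕ :=
  Module.finrank ℂ ↥(g ⊓ Module.End.eigenspace (adE H) μ)

/-- `g` has a binary spectrum: for any Frobenius functional `F` and corresponding
principal element `H`, the multiset of eigenvalues of `ad H` on `g` consists of an
equal number of `0`'s and `1`'s. -/
def HasBinarySpectrum {n : ℕ} (g : Submodule ℂ (M n)) : Prop :=
  ∀ (F : M n →ₗ[ℂ] ℂ) (H : M n), IsFrobeniusOn g F → IsPrincipal g F H →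
    eigMult g H 0 = eigMult g H 1 ∧
    eigMult g H 0 + eigMult g H 1 = Module.finrank ℂ ↥g

/-- The kernel of the Kirillov form `B_F` on `g`. -/
def kirKer {n : ℕ} (g : Submodule ℂ (M n)) (F : M n →ₗ[ℂ] ℂ) : Submodule ℂ (M n) where
  carrier := {x | x ∈ g ∧ ∀ y ∈ g, F ⁅x, y⁆ = 0}
  zero_mem' := ⟨g.zero_mem, fun y _ => by simp [Ring.lie_def]⟩
  add_mem' := by
    rintro a b ⟨ha, ha'⟩ ⟨hb, hb'⟩
    exact ⟨g.add_mem ha hb, fun y hy => by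
      have h1 := ha' y hy
      have h2 := hb' y hy
      simp only [Ring.lie_def, add_mul, mul_add, map_sub, map_add] at h1 h2 ⊢
      linear_combination h1 + h2⟩
  smul_mem' := by
    rintro c a ⟨ha, ha'⟩
    exact ⟨g.smul_mem c ha, fun y hy => by
      have h1 := ha' y hy
      simp only [Ring.lie_def, smul_mul_assoc, mul_smul_comm, map_sub, map_smul,
        smul_eq_mul] at h1 ⊢
      linear_combination c * h1⟩

/-- The index of the Lie algebra `g`: the minimum over all functionals of the
dimension of the kernel of the corresponding Kirillov form. -/
def lieIndex {n : ℕ} (g : Submodule ℂ (M n)) : ℕ :=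
  sInf {d : ℕ | ∃ F : M n →ₗ[ℂ] ℂ, d = Module.finrank ℂ ↥(kirKer g F)}

/-- The underlying undirected graph of the directed graph `Γ_{F_S}`. -/
def gammaGraph {n : ℕ} (S : Finset (Fin n × Fin n)) : SimpleGraph (Fin n) where
  Adj p q := p ≠ q ∧ ((p, q) ∈ S ∨ (q, p) ∈ S)
  symm := ⟨fun p q h => ⟨h.1.symm, h.2.symm⟩⟩
  loopless := ⟨fun p h => h.1 rfl⟩

/-- `F_S` is small: `S` consists of strict relations of the poset and `Γ_{F_S}`
is a spanning tree of the comparability graph. -/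
def Small {n : ℕ} (le : Fin n → Fin n → Prop) (S : Finset (Fin n × Fin n)) : Prop :=
  (∀ pq ∈ S, Strict le pq.1 pq.2) ∧ (gammaGraph S).IsTree

/-- `U_{F_S}(P)`: the sinks of `Γ_{F_S}`. -/
def sinks {n : ℕ} (S : Finset (Fin n × Fin n)) : Set (Fin n) :=
  {p | (∃ q, (q, p) ∈ S) ∧ ∀ q, (p, q) ∉ S}

/-- `D_{F_S}(P)`: the sources of `Γ_{F_S}`. -/
def sources {n : ℕ} (S : Finset (Fin n × Fin n)) : Set (Fin n) :=
  {p | (∃ q, (p, q) ∈ S) ∧ ∀ q, (q, p) ∉ S}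

/-- `B_{F_S}(P)`: the vertices of `Γ_{F_S}` that are neither sinks nor sources. -/
def betweens {n : ℕ} (S : Finset (Fin n × Fin n)) : Set (Fin n) :=
  {p | (∃ q, (p, q) ∈ S) ∧ ∃ q, (q, p) ∈ S}

/-- `U` is a filter (up-closed set) of the poset. -/
def IsPosetFilter {n : ℕ} (le : Fin n → Fin n → Prop) (U : Set (Fin n)) : Prop :=
  ∀ p ∈ U, ∀ q, le p q → q ∈ U

/-- `D` is an order ideal (down-closed set) of the poset. -/
def IsPosetIdeal {n : ℕ} (le : Fin n → Fin n → Prop) (D : Set (Fin n)) : Prop :=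
  ∀ p ∈ D, ∀ q, le q p → q ∈ D

/-- Helper to build elements of `Fin n` from natural numbers. -/
def fmk (n : ℕ) (h : 0 < n) (i : ℕ) : Fin n := ⟨i % n, Nat.mod_lt _ h⟩

/-- Restriction of a matrix along an embedding of index types. -/
def restrictMat {N K : ℕ} (f : Fin K → Fin N) (B : M N) : M K :=
  Matrix.of fun p q => B (f p) (f q)

/-- under the same hypotheses as Statement 0, every eigenvalue of
`ad F̂` acting on `g_A(P)` is `0` or `1`. -/
theorem spectrum_zero_one_of_small_frobenius_functional
    (n : ℕ) (le : Fin n → Fin n → Prop)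
    (hrefl : ∀ p, le p p)
    (hantisymm : ∀ p q, le p q → le q p → p = q)
    (htrans : ∀ p q r, le p q → le q r → le p r)
    (hlin : ∀ p q, le p q → p ≤ q)
    (hFrobPoset : ∃ G : M n →ₗ[ℂ] ℂ, IsFrobeniusOn (gA le) G)
    (S : Finset (Fin n × Fin n))
    (hsmall : Small le S)
    (hFrob : IsFrobeniusOn (gA le) (FS S))
    (hU : IsPosetFilter le (sinks S))
    (hD : IsPosetIdeal le (sources S))
    (hB : betweens S = ∅) :
    ∀ H : M n, IsPrincipal (gA le) (FS S) H →
      ∀ μ : ℂ, (∃ A ∈ gA le, A ≠ 0 ∧ adE H A = μ • A) → μ = 0 ∨ μ = 1 := by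
  classical
  intro H hH μ hex
  obtain ⟨A, hAg, hAne, hAeig⟩ := hex
  rcases Nat.eq_zero_or_pos n with hn | hn
  · exact absurd (by subst hn; ext p q; exact p.elim0) hAne
  have hnC : (n : ℂ) ≠ 0 := Nat.cast_ne_zero.mpr hn.ne'
  set d : Fin n → ℂ := fun p => if p ∈ sinks S then 1 else 0 with hd
  set c : ℂ := (∑ p, d p) / n with hc
  set H0 : M n := Matrix.diagonal (fun p => - d p + c) with hH0
  -- values of d on edges of S
  have hdS : ∀ pq ∈ S, d pq.1 = 0 ∧ d pq.2 = 1 := by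
    intro pq hpq
    constructor
    · have h1 : pq.1 ∉ sinks S := fun h => h.2 pq.2 hpq
      simp [hd, h1]
    · have h2 : pq.2 ∈ sinks S := by
        refine ⟨⟨pq.1, hpq⟩, fun r hr => ?_⟩
        have : pq.2 ∈ betweens S := ⟨⟨r, hr⟩, ⟨pq.1, hpq⟩⟩
        rw [hB] at this
        exact this
      simp [hd, h2]
  have hH0g : H0 ∈ gA le := by
    constructor
    · show Matrix.trace H0 = 0
      rw [hH0, Matrix.trace_diagonal]
      rw [Finset.sum_add_distrib, Finset.sum_neg_distrib, Finset.sum_const,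
        Finset.card_univ, Fintype.card_fin, hc]
      field_simp
      rw [nsmul_eq_mul, mul_div_cancel₀ _ hnC]
      ring
    · intro p q hpqne _
      simp [hH0, Matrix.diagonal_apply_ne _ hpqne]
  have hprin0 : ∀ y : M n, FS S ⁅H0, y⁆ = FS S y := by
    intro y
    have hkey : ∀ pq ∈ S, (⁅H0, y⁆ : M n) pq.1 pq.2 = y pq.1 pq.2 := by
      intro pq hpq
      obtain ⟨h1, h2⟩ := hdS pq hpq
      rw [Ring.lie_def]
      simp only [hH0, Matrix.sub_apply, Matrix.diagonal_mul, Matrix.mul_diagonal]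
      rw [h1, h2]
      ring
    simp only [FS, LinearMap.coe_mk, AddHom.coe_mk]
    exact Finset.sum_congr rfl hkey
  have hHeq : H = H0 := by
    have hsub : H - H0 ∈ gA le := Submodule.sub_mem _ hH.1 hH0g
    have h0 : H - H0 = 0 := by
      refine hFrob (H - H0) hsub fun y hy => ?_
      have e : ⁅H - H0, y⁆ = ⁅H, y⁆ - ⁅H0, y⁆ := by
        simp only [Ring.lie_def]; noncomm_ring
      rw [e, map_sub, hH.2 y hy, hprin0 y, sub_self]
    linear_combination (norm := module) h0
  obtain ⟨p, q, hpq⟩ : ∃ p q, A p q ≠ 0 := by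
    by_contra h
    push_neg at h
    exact hAne (by ext p q; simpa using h p q)
  have hent : (adE H0 A) p q = (μ • A) p q := by rw [← hHeq, hAeig]
  simp only [adE, LinearMap.sub_apply, LinearMap.mulLeft_apply, LinearMap.mulRight_apply,
    Matrix.sub_apply, hH0, Matrix.diagonal_mul, Matrix.mul_diagonal, Matrix.smul_apply,
    smul_eq_mul] at hent
  have h1 : (d q - d p) * A p q = μ * A p q := by linear_combination hent
  have hμ : μ = d q - d p := (mul_right_cancel₀ hpq h1).symm
  by_cases hq : q ∈ sinks S <;> by_cases hp : p ∈ sinks S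
  · left; simp [hμ, hd, hp, hq]
  · right; simp [hμ, hd, hp, hq]
  · exfalso
    have hne : p ≠ q := by rintro rfl; exact hq hp
    have hle : le p q := by
      by_contra hcon
      exact hpq (hAg.2 p q hne hcon)
    exact hq (hU p hp q hle)
  · left; simp [hμ, hd, hp, hq]


end
end LiePosets
end

section
/- Let P = {p₁,p₂,p₃,p₄} be the poset with relations p₁ ≼ p₃, p₂ ≼ p₃ and p₃ ≼ p₄. Then F = E*_{p₁,p₄} + E*_{p₂,p₄} + E*_{p₂,p₃} is a Frobenius functional on g_A(P), and the spectrum of g_A(P) is binary: ad(F̂) has eigenvalue 0 with multiplicity 4 and eigenvalue 1 with multiplicity 4. -/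
/-!
Common definitions: for a finite poset `P`, identified with `{1,…,n}` via a linear
extension, represented by a relation `le` on `Fin n`, the type-A Lie poset algebra
`gA le` is the Lie subalgebra of `sl(n, ℂ)` spanned by the matrix units `E p q`
for `p ≺ q` together with all trace-zero diagonal matrices (here realized as a
submodule of complex `n × n` matrices, which is closed under the commutator
bracket).  `gFull le` is the full Lie poset algebra `g(P)` (with all diagonal
matrices).  `FS S` is the functional `F_S = ∑_{(p,q) ∈ S} E*_{p,q}`.
-/

namespace LiePosets

noncomputable section

open scoped BigOperators

/-- The poset `P₂* = {p₁,p₂,p₃,p₄}` with `p₁, p₂ ≼ p₃ ≼ p₄`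
(elements `pᵢ` indexed as `i - 1 : Fin 4`). -/
def leP2s : Fin 4 → Fin 4 → Prop := fun p q =>
  p = q ∨ (p.val, q.val) ∈ ({(0,2),(1,2),(0,3),(1,3),(2,3)} : Set (ℕ × ℕ))

/-- The index set of `F = E*_{p₁,p₄} + E*_{p₂,p₄} + E*_{p₂,p₃}`. -/
def SP2s : Finset (Fin 4 × Fin 4) := {(0,3),(1,3),(1,2)}

set_option maxHeartbeats 1000000 in
lemma fv0 : ((0:Fin 4):ℕ) = 0 := rfl
lemma fv1 : ((1:Fin 4):ℕ) = 1 := rfl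
lemma fv2 : ((2:Fin 4):ℕ) = 2 := rfl
lemma fv3 : ((3:Fin 4):ℕ) = 3 := rfl

lemma FS_apply (A : M 4) : FS SP2s A = A 0 3 + A 1 3 + A 1 2 := by
  simp [FS, SP2s, Finset.sum_insert, Finset.mem_insert]; ring

def H0 : M 4 := !![1/2,0,0,0; 0,1/2,0,0; 0,0,-(1/2),0; 0,0,0,-(1/2)]
def e02 : M 4 := !![0,0,1,0;0,0,0,0;0,0,0,0;0,0,0,0]
def e12 : M 4 := !![0,0,0,0;0,0,1,0;0,0,0,0;0,0,0,0]
def e03 : M 4 := !![0,0,0,1;0,0,0,0;0,0,0,0;0,0,0,0]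
def e13 : M 4 := !![0,0,0,0;0,0,0,1;0,0,0,0;0,0,0,0]
def e23 : M 4 := !![0,0,0,0;0,0,0,0;0,0,0,1;0,0,0,0]
def dd1 : M 4 := !![1,0,0,0;0,0,0,0;0,0,0,0;0,0,0,-1]
def dd2 : M 4 := !![0,0,0,0;0,1,0,0;0,0,0,0;0,0,0,-1]
def dd3 : M 4 := !![0,0,0,0;0,0,0,0;0,0,1,0;0,0,0,-1]

section
set_option maxHeartbeats 1000000

lemma e02_mem : e02 ∈ gA leP2s := by
  refine ⟨by simp [Matrix.trace, Fin.sum_univ_four, e02, Matrix.diag, Matrix.vecHead, Matrix.vecTail], ?_⟩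
  intro p q h1 h2; fin_cases p <;> fin_cases q <;> simp_all [leP2s, fv0, fv1, fv2, fv3, e02, Matrix.vecHead, Matrix.vecTail]
lemma e12_mem : e12 ∈ gA leP2s := by
  refine ⟨by simp [Matrix.trace, Fin.sum_univ_four, e12, Matrix.diag, Matrix.vecHead, Matrix.vecTail], ?_⟩
  intro p q h1 h2; fin_cases p <;> fin_cases q <;> simp_all [leP2s, fv0, fv1, fv2, fv3, e12, Matrix.vecHead, Matrix.vecTail]
lemma e03_mem : e03 ∈ gA leP2s := by
  refine ⟨by simp [Matrix.trace, Fin.sum_univ_four, e03, Matrix.diag, Matrix.vecHead, Matrix.vecTail], ?_⟩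
  intro p q h1 h2; fin_cases p <;> fin_cases q <;> simp_all [leP2s, fv0, fv1, fv2, fv3, e03, Matrix.vecHead, Matrix.vecTail]
lemma e13_mem : e13 ∈ gA leP2s := by
  refine ⟨by simp [Matrix.trace, Fin.sum_univ_four, e13, Matrix.diag, Matrix.vecHead, Matrix.vecTail], ?_⟩
  intro p q h1 h2; fin_cases p <;> fin_cases q <;> simp_all [leP2s, fv0, fv1, fv2, fv3, e13, Matrix.vecHead, Matrix.vecTail]
lemma e23_mem : e23 ∈ gA leP2s := by
  refine ⟨by simp [Matrix.trace, Fin.sum_univ_four, e23, Matrix.diag, Matrix.vecHead, Matrix.vecTail], ?_⟩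
  intro p q h1 h2; fin_cases p <;> fin_cases q <;> simp_all [leP2s, fv0, fv1, fv2, fv3, e23, Matrix.vecHead, Matrix.vecTail]
lemma dd1_mem : dd1 ∈ gA leP2s := by
  refine ⟨by simp [Matrix.trace, Fin.sum_univ_four, dd1, Matrix.diag, Matrix.vecHead, Matrix.vecTail], ?_⟩
  intro p q h1 h2; fin_cases p <;> fin_cases q <;> simp_all [leP2s, fv0, fv1, fv2, fv3, dd1, Matrix.vecHead, Matrix.vecTail]
lemma dd2_mem : dd2 ∈ gA leP2s := by
  refine ⟨by simp [Matrix.trace, Fin.sum_univ_four, dd2, Matrix.diag, Matrix.vecHead, Matrix.vecTail], ?_⟩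
  intro p q h1 h2; fin_cases p <;> fin_cases q <;> simp_all [leP2s, fv0, fv1, fv2, fv3, dd2, Matrix.vecHead, Matrix.vecTail]
lemma dd3_mem : dd3 ∈ gA leP2s := by
  refine ⟨by simp [Matrix.trace, Fin.sum_univ_four, dd3, Matrix.diag, Matrix.vecHead, Matrix.vecTail], ?_⟩
  intro p q h1 h2; fin_cases p <;> fin_cases q <;> simp_all [leP2s, fv0, fv1, fv2, fv3, dd3, Matrix.vecHead, Matrix.vecTail]
lemma H0_mem : H0 ∈ gA leP2s := by
  refine ⟨by simp [Matrix.trace, Fin.sum_univ_four, H0, Matrix.diag, Matrix.vecHead, Matrix.vecTail]; try ring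
    , ?_⟩
  intro p q h1 h2; fin_cases p <;> fin_cases q <;> simp_all [leP2s, fv0, fv1, fv2, fv3, H0, Matrix.vecHead, Matrix.vecTail]

lemma principal_like (r : ℂ) (x : M 4) (hx : x ∈ gA leP2s)
    (h : ∀ y ∈ gA leP2s, FS SP2s ⁅x, y⁆ = r * FS SP2s y) : x = r • H0 := by
  obtain ⟨htr, hz⟩ := hx
  have z01 : x 0 1 = 0 := hz 0 1 (by decide) (by simp [leP2s, fv0, fv1, fv2, fv3])
  have z10 : x 1 0 = 0 := hz 1 0 (by decide) (by simp [leP2s, fv0, fv1, fv2, fv3])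
  have z20 : x 2 0 = 0 := hz 2 0 (by decide) (by simp [leP2s, fv0, fv1, fv2, fv3])
  have z21 : x 2 1 = 0 := hz 2 1 (by decide) (by simp [leP2s, fv0, fv1, fv2, fv3])
  have z30 : x 3 0 = 0 := hz 3 0 (by decide) (by simp [leP2s, fv0, fv1, fv2, fv3])
  have z31 : x 3 1 = 0 := hz 3 1 (by decide) (by simp [leP2s, fv0, fv1, fv2, fv3])
  have z32 : x 3 2 = 0 := hz 3 2 (by decide) (by simp [leP2s, fv0, fv1, fv2, fv3])
  have T : x 0 0 + x 1 1 + x 2 2 + x 3 3 = 0 := by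
    simpa [Matrix.trace, Fin.sum_univ_four, Matrix.diag] using htr
  have E1 := h e02 e02_mem
  have E2 := h e12 e12_mem
  have E3 := h e03 e03_mem
  have E4 := h e13 e13_mem
  have E5 := h e23 e23_mem
  have E6 := h dd1 dd1_mem
  have E7 := h dd2 dd2_mem
  have E8 := h dd3 dd3_mem
  rw [Ring.lie_def, FS_apply, FS_apply] at E1 E2 E3 E4 E5 E6 E7 E8
  simp only [e02, e12, e03, e13, e23, dd1, dd2, dd3] at E1 E2 E3 E4 E5 E6 E7 E8
  simp [Matrix.mul_apply, Fin.sum_univ_four, Matrix.sub_apply,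
    Matrix.vecHead, Matrix.vecTail, Matrix.vecMul, dotProduct] at E1 E2 E3 E4 E5 E6 E7 E8
  have c23 : x 2 3 = 0 := by linear_combination -E1 + z10
  have ci : x 1 1 - x 2 2 = r := by linear_combination E2 + c23
  have cii : x 0 0 - x 3 3 = r := by linear_combination E3 - z10
  have ciii : x 1 1 - x 3 3 = r := by linear_combination E4 - z01 + z32
  have c03 : x 0 3 = 0 := by linear_combination (-3/4 : ℂ)*E6 + (1/4 : ℂ)*E7 + (1/4 : ℂ)*E8
  have c13 : x 1 3 = 0 := by linear_combination (1/2 : ℂ)*E6 - (1/2 : ℂ)*E7 - (1/2 : ℂ)*E8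
  have c12 : x 1 2 = 0 := by linear_combination (-1/4 : ℂ)*E6 + (-1/4 : ℂ)*E7 + (3/4 : ℂ)*E8
  have c02 : x 0 2 = 0 := by linear_combination E5 + (1/4 : ℂ)*E6 + (1/4 : ℂ)*E7 - (3/4 : ℂ)*E8
  have g00 : x 0 0 = r/2 := by
    linear_combination (1/4 : ℂ)*ci + (3/4 : ℂ)*cii + (-1/2 : ℂ)*ciii + (1/4 : ℂ)*T
  have g11 : x 1 1 = r/2 := by
    linear_combination (1/4 : ℂ)*ci + (-1/4 : ℂ)*cii + (1/2 : ℂ)*ciii + (1/4 : ℂ)*T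
  have g22 : x 2 2 = -(r/2) := by
    linear_combination (-3/4 : ℂ)*ci + (-1/4 : ℂ)*cii + (1/2 : ℂ)*ciii + (1/4 : ℂ)*T
  have g33 : x 3 3 = -(r/2) := by
    linear_combination (1/4 : ℂ)*ci + (-1/4 : ℂ)*cii + (-1/2 : ℂ)*ciii + (1/4 : ℂ)*T
  ext i j
  fin_cases i <;> fin_cases j <;>
    simp [H0, Matrix.vecHead, Matrix.vecTail, g00,z01,c02,c03,z10,g11,c12,c13,z20,z21,g22,c23,z30,z31,z32,g33] <;>
    ring
end

section
set_option maxHeartbeats 2000000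

def bA : Fin 8 → M 4 := ![dd1, dd2, dd3, e02, e12, e03, e13, e23]
def b0 : Fin 4 → M 4 := ![dd1, dd2, dd3, e23]
def b1 : Fin 4 → M 4 := ![e02, e12, e03, e13]

lemma bA_indep : LinearIndependent ℂ bA := by
  rw [Fintype.linearIndependent_iff]
  intro g hg
  rw [Fin.sum_univ_eight] at hg
  simp only [show bA 0 = dd1 from rfl, show bA 1 = dd2 from rfl, show bA 2 = dd3 from rfl,
    show bA 3 = e02 from rfl, show bA 4 = e12 from rfl, show bA 5 = e03 from rfl,
    show bA 6 = e13 from rfl, show bA 7 = e23 from rfl] at hg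
  have e := fun p q => congrFun (congrFun hg p) q
  simp only [Matrix.add_apply, Matrix.smul_apply, Matrix.zero_apply, smul_eq_mul] at e
  have h00 := e 0 0; have h11 := e 1 1; have h22 := e 2 2
  have h02 := e 0 2; have h12 := e 1 2; have h03 := e 0 3
  have h13 := e 1 3; have h23 := e 2 3
  simp [dd1, dd2, dd3, e02, e12, e03, e13, e23, Matrix.vecHead, Matrix.vecTail]
    at h00 h11 h22 h02 h12 h03 h13 h23
  intro i
  fin_cases i <;> simp_all

lemma b0_indep : LinearIndependent ℂ b0 := by
  rw [Fintype.linearIndependent_iff]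
  intro g hg
  rw [Fin.sum_univ_four] at hg
  simp only [show b0 0 = dd1 from rfl, show b0 1 = dd2 from rfl, show b0 2 = dd3 from rfl,
    show b0 3 = e23 from rfl] at hg
  have e := fun p q => congrFun (congrFun hg p) q
  simp only [Matrix.add_apply, Matrix.smul_apply, Matrix.zero_apply, smul_eq_mul] at e
  have h00 := e 0 0; have h11 := e 1 1; have h22 := e 2 2; have h23 := e 2 3
  simp [dd1, dd2, dd3, e23, Matrix.vecHead, Matrix.vecTail] at h00 h11 h22 h23
  intro i; fin_cases i <;> simp_all

lemma b1_indep : LinearIndependent ℂ b1 := by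
  rw [Fintype.linearIndependent_iff]
  intro g hg
  rw [Fin.sum_univ_four] at hg
  simp only [show b1 0 = e02 from rfl, show b1 1 = e12 from rfl, show b1 2 = e03 from rfl,
    show b1 3 = e13 from rfl] at hg
  have e := fun p q => congrFun (congrFun hg p) q
  simp only [Matrix.add_apply, Matrix.smul_apply, Matrix.zero_apply, smul_eq_mul] at e
  have h02 := e 0 2; have h12 := e 1 2; have h03 := e 0 3; have h13 := e 1 3
  simp [e02, e12, e03, e13, Matrix.vecHead, Matrix.vecTail] at h02 h12 h03 h13
  intro i; fin_cases i <;> simp_all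

lemma gA_eq_span : gA leP2s = Submodule.span ℂ (Set.range bA) := by
  apply le_antisymm
  · intro A hA
    obtain ⟨htr, hz⟩ := hA
    have z01 : A 0 1 = 0 := hz 0 1 (by decide) (by simp [leP2s, fv0, fv1, fv2, fv3])
    have z10 : A 1 0 = 0 := hz 1 0 (by decide) (by simp [leP2s, fv0, fv1, fv2, fv3])
    have z20 : A 2 0 = 0 := hz 2 0 (by decide) (by simp [leP2s, fv0, fv1, fv2, fv3])
    have z21 : A 2 1 = 0 := hz 2 1 (by decide) (by simp [leP2s, fv0, fv1, fv2, fv3])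
    have z30 : A 3 0 = 0 := hz 3 0 (by decide) (by simp [leP2s, fv0, fv1, fv2, fv3])
    have z31 : A 3 1 = 0 := hz 3 1 (by decide) (by simp [leP2s, fv0, fv1, fv2, fv3])
    have z32 : A 3 2 = 0 := hz 3 2 (by decide) (by simp [leP2s, fv0, fv1, fv2, fv3])
    have T : A 0 0 + A 1 1 + A 2 2 + A 3 3 = 0 := by
      simpa [Matrix.trace, Fin.sum_univ_four, Matrix.diag] using htr
    have h33 : A 3 3 = -(A 0 0) - A 1 1 - A 2 2 := by linear_combination T
    have hrep : A = A 0 0 • dd1 + A 1 1 • dd2 + A 2 2 • dd3 + A 0 2 • e02 + A 1 2 • e12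
        + A 0 3 • e03 + A 1 3 • e13 + A 2 3 • e23 := by
      ext i j
      fin_cases i <;> fin_cases j <;>
        simp [dd1, dd2, dd3, e02, e12, e03, e13, e23, Matrix.vecHead, Matrix.vecTail,
          z01, z10, z20, z21, z30, z31, z32, h33] <;> ring
    rw [hrep]
    have m : ∀ i : Fin 8, bA i ∈ Submodule.span ℂ (Set.range bA) :=
      fun i => Submodule.subset_span ⟨i, rfl⟩
    exact Submodule.add_mem _ (Submodule.add_mem _ (Submodule.add_mem _ (Submodule.add_mem _
      (Submodule.add_mem _ (Submodule.add_mem _ (Submodule.add_mem _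
        (Submodule.smul_mem _ _ (m 0)) (Submodule.smul_mem _ _ (m 1)))
        (Submodule.smul_mem _ _ (m 2))) (Submodule.smul_mem _ _ (m 3)))
        (Submodule.smul_mem _ _ (m 4))) (Submodule.smul_mem _ _ (m 5)))
        (Submodule.smul_mem _ _ (m 6))) (Submodule.smul_mem _ _ (m 7))
  · rw [Submodule.span_le]
    rintro _ ⟨i, rfl⟩
    simp only [SetLike.mem_coe]
    fin_cases i
    exacts [dd1_mem, dd2_mem, dd3_mem, e02_mem, e12_mem, e03_mem, e13_mem, e23_mem]

lemma inf0_eq : gA leP2s ⊓ Module.End.eigenspace (adE H0) 0 = Submodule.span ℂ (Set.range b0) := by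
  apply le_antisymm
  · rintro A ⟨hA, heig⟩
    obtain ⟨htr, hz⟩ := hA
    rw [SetLike.mem_coe, Module.End.mem_eigenspace_iff] at heig
    simp only [adE, LinearMap.sub_apply, LinearMap.mulLeft_apply, LinearMap.mulRight_apply,
      zero_smul] at heig
    have e := fun p q => congrFun (congrFun heig p) q
    simp only [Matrix.sub_apply, Matrix.mul_apply, Fin.sum_univ_four, Matrix.zero_apply] at e
    have h02' := e 0 2; have h12' := e 1 2; have h03' := e 0 3; have h13' := e 1 3
    simp [H0, Matrix.vecHead, Matrix.vecTail] at h02' h12' h03' h13'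
    have z01 : A 0 1 = 0 := hz 0 1 (by decide) (by simp [leP2s, fv0, fv1, fv2, fv3])
    have z10 : A 1 0 = 0 := hz 1 0 (by decide) (by simp [leP2s, fv0, fv1, fv2, fv3])
    have z20 : A 2 0 = 0 := hz 2 0 (by decide) (by simp [leP2s, fv0, fv1, fv2, fv3])
    have z21 : A 2 1 = 0 := hz 2 1 (by decide) (by simp [leP2s, fv0, fv1, fv2, fv3])
    have z30 : A 3 0 = 0 := hz 3 0 (by decide) (by simp [leP2s, fv0, fv1, fv2, fv3])
    have z31 : A 3 1 = 0 := hz 3 1 (by decide) (by simp [leP2s, fv0, fv1, fv2, fv3])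
    have z32 : A 3 2 = 0 := hz 3 2 (by decide) (by simp [leP2s, fv0, fv1, fv2, fv3])
    have T : A 0 0 + A 1 1 + A 2 2 + A 3 3 = 0 := by
      simpa [Matrix.trace, Fin.sum_univ_four, Matrix.diag] using htr
    have h33 : A 3 3 = -(A 0 0) - A 1 1 - A 2 2 := by linear_combination T
    have c02 : A 0 2 = 0 := by linear_combination h02'
    have c12 : A 1 2 = 0 := by linear_combination h12'
    have c03 : A 0 3 = 0 := by linear_combination h03'
    have c13 : A 1 3 = 0 := by linear_combination h13'
    have hrep : A = A 0 0 • dd1 + A 1 1 • dd2 + A 2 2 • dd3 + A 2 3 • e23 := by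
      ext i j
      fin_cases i <;> fin_cases j <;>
        simp [dd1, dd2, dd3, e23, Matrix.vecHead, Matrix.vecTail,
          z01, z10, z20, z21, z30, z31, z32, h33, c02, c12, c03, c13] <;> ring
    rw [hrep]
    have m : ∀ i : Fin 4, b0 i ∈ Submodule.span ℂ (Set.range b0) :=
      fun i => Submodule.subset_span ⟨i, rfl⟩
    exact Submodule.add_mem _ (Submodule.add_mem _ (Submodule.add_mem _
      (Submodule.smul_mem _ _ (m 0)) (Submodule.smul_mem _ _ (m 1)))
      (Submodule.smul_mem _ _ (m 2))) (Submodule.smul_mem _ _ (m 3))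
  · rw [Submodule.span_le]
    rintro _ ⟨i, rfl⟩
    simp only [SetLike.mem_coe, Submodule.mem_inf]
    have heig : ∀ v : M 4, H0 * v - v * H0 = 0 → v ∈ Module.End.eigenspace (adE H0) 0 := by
      intro v hv
      rw [Module.End.mem_eigenspace_iff]
      simp only [adE, LinearMap.sub_apply, LinearMap.mulLeft_apply, LinearMap.mulRight_apply,
        zero_smul]
      exact hv
    fin_cases i
    · exact ⟨dd1_mem, heig _ (by ext i j; fin_cases i <;> fin_cases j <;>
        simp [H0, b0, dd1, Matrix.vecMul, dotProduct, Matrix.mul_apply, Fin.sum_univ_four, Matrix.vecHead, Matrix.vecTail] <;> try ring)⟩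
    · exact ⟨dd2_mem, heig _ (by ext i j; fin_cases i <;> fin_cases j <;>
        simp [H0, b0, dd2, Matrix.vecMul, dotProduct, Matrix.mul_apply, Fin.sum_univ_four, Matrix.vecHead, Matrix.vecTail] <;> try ring)⟩
    · exact ⟨dd3_mem, heig _ (by ext i j; fin_cases i <;> fin_cases j <;>
        simp [H0, b0, dd3, Matrix.vecMul, dotProduct, Matrix.mul_apply, Fin.sum_univ_four, Matrix.vecHead, Matrix.vecTail] <;> try ring)⟩
    · exact ⟨e23_mem, heig _ (by ext i j; fin_cases i <;> fin_cases j <;>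
        simp [H0, b0, e23, Matrix.vecMul, dotProduct, Matrix.mul_apply, Fin.sum_univ_four, Matrix.vecHead, Matrix.vecTail] <;> try ring)⟩

lemma inf1_eq : gA leP2s ⊓ Module.End.eigenspace (adE H0) 1 = Submodule.span ℂ (Set.range b1) := by
  apply le_antisymm
  · rintro A ⟨hA, heig⟩
    obtain ⟨htr, hz⟩ := hA
    rw [SetLike.mem_coe, Module.End.mem_eigenspace_iff] at heig
    simp only [adE, LinearMap.sub_apply, LinearMap.mulLeft_apply, LinearMap.mulRight_apply,
      one_smul] at heig
    have e := fun p q => congrFun (congrFun heig p) q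
    simp only [Matrix.sub_apply, Matrix.mul_apply, Fin.sum_univ_four] at e
    have h00' := e 0 0; have h11' := e 1 1; have h22' := e 2 2; have h33' := e 3 3
    have h23' := e 2 3
    simp [H0, Matrix.vecHead, Matrix.vecTail] at h00' h11' h22' h33' h23'
    have z01 : A 0 1 = 0 := hz 0 1 (by decide) (by simp [leP2s, fv0, fv1, fv2, fv3])
    have z10 : A 1 0 = 0 := hz 1 0 (by decide) (by simp [leP2s, fv0, fv1, fv2, fv3])
    have z20 : A 2 0 = 0 := hz 2 0 (by decide) (by simp [leP2s, fv0, fv1, fv2, fv3])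
    have z21 : A 2 1 = 0 := hz 2 1 (by decide) (by simp [leP2s, fv0, fv1, fv2, fv3])
    have z30 : A 3 0 = 0 := hz 3 0 (by decide) (by simp [leP2s, fv0, fv1, fv2, fv3])
    have z31 : A 3 1 = 0 := hz 3 1 (by decide) (by simp [leP2s, fv0, fv1, fv2, fv3])
    have z32 : A 3 2 = 0 := hz 3 2 (by decide) (by simp [leP2s, fv0, fv1, fv2, fv3])
    have c00 : A 0 0 = 0 := by linear_combination -h00'
    have c11 : A 1 1 = 0 := by linear_combination -h11'
    have c22 : A 2 2 = 0 := by linear_combination -h22'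
    have c33 : A 3 3 = 0 := by linear_combination -h33'
    have c23 : A 2 3 = 0 := by linear_combination -h23'
    have hrep : A = A 0 2 • e02 + A 1 2 • e12 + A 0 3 • e03 + A 1 3 • e13 := by
      ext i j
      fin_cases i <;> fin_cases j <;>
        simp [e02, e12, e03, e13, Matrix.vecHead, Matrix.vecTail,
          z01, z10, z20, z21, z30, z31, z32, c00, c11, c22, c33, c23] <;> ring
    rw [hrep]
    have m : ∀ i : Fin 4, b1 i ∈ Submodule.span ℂ (Set.range b1) :=
      fun i => Submodule.subset_span ⟨i, rfl⟩
    exact Submodule.add_mem _ (Submodule.add_mem _ (Submodule.add_mem _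
      (Submodule.smul_mem _ _ (m 0)) (Submodule.smul_mem _ _ (m 1)))
      (Submodule.smul_mem _ _ (m 2))) (Submodule.smul_mem _ _ (m 3))
  · rw [Submodule.span_le]
    rintro _ ⟨i, rfl⟩
    simp only [SetLike.mem_coe, Submodule.mem_inf]
    have heig : ∀ v : M 4, H0 * v - v * H0 = v → v ∈ Module.End.eigenspace (adE H0) 1 := by
      intro v hv
      rw [Module.End.mem_eigenspace_iff]
      simpa only [adE, LinearMap.sub_apply, LinearMap.mulLeft_apply, LinearMap.mulRight_apply,
        one_smul] using hv
    fin_cases i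
    · exact ⟨e02_mem, heig _ (by ext i j; fin_cases i <;> fin_cases j <;>
        simp [H0, b1, e02, Matrix.vecMul, dotProduct, Matrix.mul_apply, Fin.sum_univ_four, Matrix.vecHead, Matrix.vecTail] <;> try ring)⟩
    · exact ⟨e12_mem, heig _ (by ext i j; fin_cases i <;> fin_cases j <;>
        simp [H0, b1, e12, Matrix.vecMul, dotProduct, Matrix.mul_apply, Fin.sum_univ_four, Matrix.vecHead, Matrix.vecTail] <;> try ring)⟩
    · exact ⟨e03_mem, heig _ (by ext i j; fin_cases i <;> fin_cases j <;>
        simp [H0, b1, e03, Matrix.vecMul, dotProduct, Matrix.mul_apply, Fin.sum_univ_four, Matrix.vecHead, Matrix.vecTail] <;> try ring)⟩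
    · exact ⟨e13_mem, heig _ (by ext i j; fin_cases i <;> fin_cases j <;>
        simp [H0, b1, e13, Matrix.vecMul, dotProduct, Matrix.mul_apply, Fin.sum_univ_four, Matrix.vecHead, Matrix.vecTail] <;> try ring)⟩

lemma finrank_gA_eq : Module.finrank ℂ ↥(gA leP2s) = 8 := by
  rw [gA_eq_span, finrank_span_eq_card bA_indep]
  simp

lemma eigMult0 : eigMult (gA leP2s) H0 0 = 4 := by
  rw [eigMult, inf0_eq, finrank_span_eq_card b0_indep]
  simp

lemma eigMult1 : eigMult (gA leP2s) H0 1 = 4 := by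
  rw [eigMult, inf1_eq, finrank_span_eq_card b1_indep]
  simp

end

/-- `F` is Frobenius on `g_A(P₂*)` and the spectrum is binary:
eigenvalues `0` and `1`, each with multiplicity `4`. -/
theorem P2star_frobenius_binary_spectrum :
    IsFrobeniusOn (gA leP2s) (FS SP2s) ∧
    ∀ H : M 4, IsPrincipal (gA leP2s) (FS SP2s) H →
      eigMult (gA leP2s) H 0 = 4 ∧ eigMult (gA leP2s) H 1 = 4 ∧
      eigMult (gA leP2s) H 0 + eigMult (gA leP2s) H 1 = Module.finrank ℂ ↥(gA leP2s) := by
  constructor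
  · intro x hx hB
    have hx0 : x = (0 : ℂ) • H0 :=
      principal_like 0 x hx (fun y hy => by rw [hB y hy, zero_mul])
    simpa using hx0
  · intro H hP
    have hH : H = (1 : ℂ) • H0 :=
      principal_like 1 H hP.1 (fun y hy => by rw [hP.2 y hy, one_mul])
    rw [one_smul] at hH
    subst hH
    exact ⟨eigMult0, eigMult1, by rw [eigMult0, eigMult1, finrank_gA_eq]⟩

end
end LiePosets
end
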